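/- For integers d ≥ 1 and 0 ≤ r ≤ d, the minimum size of a percolating set in the r-edge bootstrap percolation on the hypercube Q_d = K_2^d is m_e(K_2^d, r) = ∑_{i=0}^{r} (r − i)·C(d, i). -/

import Mathlib

/-- One round of the `r`-edge bootstrap percolation process on `G`: an inactive edge
becomes active if one of its endpoints is incident to at least `r` active edges. -/
def edgeStep {V : Type*} (G : SimpleGraph V) (r : ℕ) (A : Set (Sym2 V)) : Set (Sym2 V) :=
  A ∪ {e | e ∈ G.edgeSet ∧ ∃ v ∈ e, r ≤ {f | f ∈ G.edgeSet ∧ v ∈ f ∧ f ∈ A}.ncard}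

/-- A set `A` of edges of `G` percolates in the `r`-edge bootstrap percolation process
if iterating the activation rule eventually activates every edge of `G`. -/
def EdgePercolates {V : Type*} (G : SimpleGraph V) (r : ℕ) (A : Set (Sym2 V)) : Prop :=
  A ⊆ G.edgeSet ∧ ∃ k, (edgeStep G r)^[k] A = G.edgeSet

/-- `me G r` is the minimum size of a percolating set in the `r`-edge bootstrap
percolation process on `G`. -/
noncomputable def me {V : Type*} (G : SimpleGraph V) (r : ℕ) : ℕ :=
  sInf {k | ∃ A, EdgePercolates G r A ∧ A.ncard = k}

/-- The Hamming graph `K_n^d`: vertices are `d`-tuples over `{0, …, n−1}`, with two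
tuples adjacent if and only if they differ in exactly one coordinate. -/
def hammingGraph (n d : ℕ) : SimpleGraph (Fin d → Fin n) where
  Adj x y := ∃! i, x i ≠ y i
  symm := by
    refine ⟨?_⟩
    rintro x y ⟨i, hi, hu⟩
    exact ⟨i, hi.symm, fun j hj => hu j hj.symm⟩
  loopless := by
    refine ⟨?_⟩
    rintro x ⟨i, hi, -⟩
    exact hi rfl

namespace MeHyper

abbrev X (d : ℕ) := Fin d → Fin 2
abbrev Q (d : ℕ) : SimpleGraph (X d) := hammingGraph 2 d

def flp {d : ℕ} (i : Fin d) (x : X d) : X d := Function.update x i (1 - x i)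

lemma two_ne {a : Fin 2} : 1 - a ≠ a := by revert a; decide
lemma two_eq {a b : Fin 2} (h : a ≠ b) : b = 1 - a := by revert a b; decide

@[simp] lemma flp_self {d : ℕ} (i : Fin d) (x : X d) : flp i x i = 1 - x i :=
  Function.update_self _ _ _

lemma flp_ne' {d : ℕ} {i j : Fin d} (h : j ≠ i) (x : X d) : flp i x j = x j :=
  Function.update_of_ne h _ _

lemma two_sub_sub (a : Fin 2) : 1 - (1 - a) = a := by revert a; decide

@[simp] lemma flp_flp {d : ℕ} (i : Fin d) (x : X d) : flp i (flp i x) = x := by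
  funext j
  rcases eq_or_ne j i with rfl | h
  · rw [flp_self, flp_self, two_sub_sub]
  · rw [flp_ne' h, flp_ne' h]

lemma flp_ne_self {d : ℕ} (i : Fin d) (x : X d) : flp i x ≠ x := by
  intro h
  have := congrFun h i
  rw [flp_self] at this
  exact two_ne this

lemma adj_iff {d : ℕ} {x y : X d} : (Q d).Adj x y ↔ ∃ i, y = flp i x := by
  constructor
  · rintro (⟨i, hi, hu⟩ : ∃! i, x i ≠ y i)
    refine ⟨i, funext fun j => ?_⟩
    rcases eq_or_ne j i with rfl | h
    · rw [flp_self]; exact (two_eq hi).symm ▸ rfl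
    · rw [flp_ne' h]
      by_contra hc
      exact h (hu j (Ne.symm hc))
  · rintro ⟨i, rfl⟩
    refine ⟨i, Ne.symm (Ne.symm ?_), fun j hj => ?_⟩
    · rw [flp_self]; exact fun hc => two_ne hc.symm
    · by_contra h
      exact hj (by rw [flp_ne' h])

lemma adj_flp {d : ℕ} (i : Fin d) (x : X d) : (Q d).Adj x (flp i x) := adj_iff.mpr ⟨i, rfl⟩

lemma edge_mem {d : ℕ} (i : Fin d) (x : X d) : s(x, flp i x) ∈ (Q d).edgeSet := adj_flp i x

lemma mem_edgeSet_iff {d : ℕ} {e : Sym2 (X d)} :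
    e ∈ (Q d).edgeSet ↔ ∃ x i, e = s(x, flp i x) := by
  constructor
  · intro he
    induction e using Sym2.ind with
    | _ x y =>
      rw [SimpleGraph.mem_edgeSet] at he
      obtain ⟨i, hy⟩ := adj_iff.mp he
      exact ⟨x, i, by rw [hy]⟩
  · rintro ⟨x, i, rfl⟩; exact edge_mem i x

lemma flp_inj {d : ℕ} {i j : Fin d} {x : X d} (h : flp i x = flp j x) : i = j := by
  by_contra hij
  have := congrFun h i
  rw [flp_self, flp_ne' hij] at this
  exact two_ne this

/-- The edge at vertex `x` in direction `i`. -/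
def E {d : ℕ} (x : X d) (i : Fin d) : Sym2 (X d) := s(x, flp i x)

lemma E_flp {d : ℕ} (x : X d) (i : Fin d) : E (flp i x) i = E x i := by
  unfold E; rw [flp_flp]; exact Sym2.eq_swap

lemma E_inj {d : ℕ} (x : X d) : Function.Injective (E x) := by
  intro i j h
  unfold E at h
  rw [Sym2.eq_iff] at h
  rcases h with ⟨-, h⟩ | ⟨h1, -⟩
  · exact flp_inj h
  · exact absurd h1.symm (flp_ne_self j x)

/-- The edges at a vertex are exactly the `E x i`. -/
lemma edges_at {d : ℕ} (x : X d) :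
    {f | f ∈ (Q d).edgeSet ∧ x ∈ f} = Set.range (E x) := by
  ext f
  constructor
  · rintro ⟨hf, hx⟩
    induction f using Sym2.ind with
    | _ a b =>
      rw [SimpleGraph.mem_edgeSet] at hf
      obtain ⟨i, hy⟩ := adj_iff.mp hf
      subst hy
      rcases Sym2.mem_iff.mp hx with rfl | h
      · exact ⟨i, rfl⟩
      · refine ⟨i, ?_⟩
        subst h
        unfold E
        rw [flp_flp]
        exact Sym2.eq_swap
  · rintro ⟨i, rfl⟩
    exact ⟨edge_mem i x, Sym2.mem_mk_left x _⟩

set_option linter.unusedSectionVars false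

section Ev

variable {V : Type*} [Finite V] (G : SimpleGraph V) (r : ℕ)

lemma subset_edgeStep (A : Set (Sym2 V)) : A ⊆ edgeStep G r A := Set.subset_union_left

lemma edgeStep_mono {A B : Set (Sym2 V)} (h : A ⊆ B) : edgeStep G r A ⊆ edgeStep G r B := by
  apply Set.union_subset_union h
  rintro e ⟨he, v, hv, hc⟩
  refine ⟨he, v, hv, le_trans hc ?_⟩
  exact Set.ncard_le_ncard (fun f ⟨h1, h2, h3⟩ => ⟨h1, h2, h h3⟩) (Set.toFinite _)

lemma edgeStep_subset_edgeSet {A : Set (Sym2 V)} (h : A ⊆ G.edgeSet) :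
    edgeStep G r A ⊆ G.edgeSet := Set.union_subset h (fun _ he => he.1)

lemma iterate_subset_iterate_succ (A : Set (Sym2 V)) (k : ℕ) :
    (edgeStep G r)^[k] A ⊆ (edgeStep G r)^[k + 1] A := by
  rw [Function.iterate_succ_apply']
  exact subset_edgeStep G r _

lemma iterate_mono_steps (A : Set (Sym2 V)) {k m : ℕ} (h : k ≤ m) :
    (edgeStep G r)^[k] A ⊆ (edgeStep G r)^[m] A := by
  induction m with
  | zero => simp_all
  | succ m ih =>
    rcases Nat.lt_or_ge k (m + 1) with h' | h'
    · exact (ih (Nat.lt_succ_iff.mp h')).trans (iterate_subset_iterate_succ G r A m)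
    · have : k = m + 1 := le_antisymm h h'
      subst this; rfl

lemma iterate_mono {A B : Set (Sym2 V)} (h : A ⊆ B) (k : ℕ) :
    (edgeStep G r)^[k] A ⊆ (edgeStep G r)^[k] B := by
  induction k with
  | zero => exact h
  | succ k ih =>
    rw [Function.iterate_succ_apply', Function.iterate_succ_apply']
    exact edgeStep_mono G r ih

lemma iterate_subset_edgeSet {A : Set (Sym2 V)} (h : A ⊆ G.edgeSet) (k : ℕ) :
    (edgeStep G r)^[k] A ⊆ G.edgeSet := by
  induction k with
  | zero => exact h
  | succ k ih =>
    rw [Function.iterate_succ_apply']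
    exact edgeStep_subset_edgeSet G r ih

/-- The set of eventually active edges. -/
def ev (A : Set (Sym2 V)) : Set (Sym2 V) := ⋃ k, (edgeStep G r)^[k] A

lemma subset_ev (A : Set (Sym2 V)) : A ⊆ ev G r A := Set.subset_iUnion_of_subset 0 (by rfl)

lemma iterate_subset_ev (A : Set (Sym2 V)) (k : ℕ) : (edgeStep G r)^[k] A ⊆ ev G r A :=
  Set.subset_iUnion_of_subset k (by rfl)

lemma ev_mono {A B : Set (Sym2 V)} (h : A ⊆ B) : ev G r A ⊆ ev G r B :=
  Set.iUnion_mono fun k => iterate_mono G r h k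

lemma exists_stab (A : Set (Sym2 V)) : ∃ K, ev G r A = (edgeStep G r)^[K] A := by
  have key : ∃ k, (edgeStep G r)^[k + 1] A = (edgeStep G r)^[k] A := by
    by_contra hc
    push_neg at hc
    have grow : ∀ k, A.ncard + k ≤ ((edgeStep G r)^[k] A).ncard := by
      intro k
      induction k with
      | zero => simp
      | succ k ih =>
        have hlt : ((edgeStep G r)^[k] A).ncard < ((edgeStep G r)^[k + 1] A).ncard :=
          Set.ncard_lt_ncard
            (ssubset_of_subset_of_ne (iterate_subset_iterate_succ G r A k) (hc k).symm)
            (Set.toFinite _)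
        omega
    have h1 := grow (Nat.card (Sym2 V) + 1)
    have hle : ((edgeStep G r)^[Nat.card (Sym2 V) + 1] A).ncard ≤ Nat.card (Sym2 V) := by
      rw [← Set.ncard_univ (Sym2 V)]
      exact Set.ncard_le_ncard (Set.subset_univ _) (Set.toFinite _)
    omega
  obtain ⟨k, hk⟩ := key
  have stab : ∀ m, k ≤ m → (edgeStep G r)^[m] A = (edgeStep G r)^[k] A := by
    intro m hm
    induction m, hm using Nat.le_induction with
    | base => rfl
    | succ m hm ih =>
      rw [Function.iterate_succ_apply', ih]
      have := hk
      rw [Function.iterate_succ_apply'] at this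
      exact this
  refine ⟨k, subset_antisymm ?_ (iterate_subset_ev G r A k)⟩
  intro e he
  obtain ⟨s, ⟨m, rfl⟩, hm⟩ := he
  rcases Nat.lt_or_ge m k with h' | h'
  · exact iterate_mono_steps G r A (le_of_lt h') hm
  · have := stab m h'
    simp only [this] at hm ⊢
    exact hm

lemma ev_closed (A : Set (Sym2 V)) : edgeStep G r (ev G r A) = ev G r A := by
  obtain ⟨K, hK⟩ := exists_stab G r A
  apply subset_antisymm
  · intro e he
    rw [hK] at he
    have : e ∈ (edgeStep G r)^[K + 1] A := by
      rw [Function.iterate_succ_apply']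
      exact he
    exact iterate_subset_ev G r A (K + 1) this
  · exact subset_edgeStep G r _

lemma step_subset_ev {A B : Set (Sym2 V)} (h : B ⊆ ev G r A) :
    edgeStep G r B ⊆ ev G r A := by
  have := edgeStep_mono G r h
  rwa [ev_closed] at this

lemma iterate_subset_ev_of {A B : Set (Sym2 V)} (h : B ⊆ ev G r A) (k : ℕ) :
    (edgeStep G r)^[k] B ⊆ ev G r A := by
  induction k with
  | zero => exact h
  | succ k ih =>
    rw [Function.iterate_succ_apply']
    exact step_subset_ev G r ih

lemma ev_subset_edgeSet {A : Set (Sym2 V)} (h : A ⊆ G.edgeSet) : ev G r A ⊆ G.edgeSet :=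
  Set.iUnion_subset fun k => iterate_subset_edgeSet G r h k

lemma percolates_iff {A : Set (Sym2 V)} (h : A ⊆ G.edgeSet) :
    EdgePercolates G r A ↔ G.edgeSet ⊆ ev G r A := by
  constructor
  · rintro ⟨-, k, hk⟩
    rw [← hk]
    exact iterate_subset_ev G r A k
  · intro he
    obtain ⟨K, hK⟩ := exists_stab G r A
    refine ⟨h, K, subset_antisymm ?_ ?_⟩
    · exact iterate_subset_edgeSet G r h K
    · rw [← hK]; exact he

/-- Activation in the closure. -/
lemma activate {A : Set (Sym2 V)} {e : Sym2 V} {v : V} (he : e ∈ G.edgeSet) (hv : v ∈ e)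
    (hc : r ≤ {f | f ∈ G.edgeSet ∧ v ∈ f ∧ f ∈ ev G r A}.ncard) : e ∈ ev G r A := by
  rw [← ev_closed G r A]
  exact Set.mem_union_right _ ⟨he, v, hv, hc⟩

end Ev

section Count

variable {d : ℕ}

lemma two_cases (a : Fin 2) : a = 0 ∨ a = 1 := by revert a; decide

def lowEdge (d : ℕ) : (Σ _i : Fin d, {x : X d // x _i = 0}) → {e : Sym2 (X d) // e ∈ (Q d).edgeSet} :=
  fun p => ⟨s(p.2.1, flp p.1 p.2.1), edge_mem p.1 p.2.1⟩

lemma lowEdge_bij (d : ℕ) : Function.Bijective (lowEdge d) := by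
  constructor
  · rintro ⟨i, x, hx⟩ ⟨j, y, hy⟩ h
    simp only [lowEdge, Subtype.mk.injEq, Sym2.eq_iff] at h
    rcases h with ⟨rfl, h2⟩ | ⟨h1, h2⟩
    · obtain rfl : i = j := flp_inj h2
      rfl
    · -- x = flp j y and flp i x = y
      exfalso
      subst h1
      rcases eq_or_ne i j with rfl | hij
      · have h3 : (1 : Fin 2) - y i = 0 := by rw [← flp_self i y]; exact hx
        rw [hy] at h3
        exact absurd h3 (by decide)
      · have e1 : flp i (flp j y) j = flp j y j := flp_ne' (Ne.symm hij) _
        rw [h2, flp_self, hy] at e1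
        exact absurd e1 (by decide)
  · rintro ⟨e, he⟩
    obtain ⟨x, i, rfl⟩ := mem_edgeSet_iff.mp he
    rcases two_cases (x i) with h0 | h1
    · exact ⟨⟨i, x, h0⟩, rfl⟩
    · refine ⟨⟨i, flp i x, by rw [flp_self, h1]; rfl⟩, ?_⟩
      simp only [lowEdge, Subtype.mk.injEq, flp_flp]
      exact Sym2.eq_swap

def coordFix (i : Fin d) : {x : X d // x i = 0} ≃ ({j : Fin d // j ≠ i} → Fin 2) where
  toFun x j := x.1 j.1
  invFun f := ⟨fun j => if h : j = i then 0 else f ⟨j, h⟩, by simp⟩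
  left_inv x := by
    ext j
    by_cases h : j = i
    · subst h; simp [x.2]
    · simp [h]
  right_inv f := by
    ext j
    simp [j.2]

lemma card_coordFix (i : Fin d) : Fintype.card {x : X d // x i = 0} = 2 ^ (d - 1) := by
  rw [Fintype.card_congr (coordFix i), Fintype.card_fun, Fintype.card_fin,
    Fintype.card_subtype_compl, Fintype.card_subtype_eq, Fintype.card_fin]

lemma card_edgeSubtype (d : ℕ) :
    Nat.card {e : Sym2 (X d) // e ∈ (Q d).edgeSet} = d * 2 ^ (d - 1) := by
  classical
  haveI : Fintype {e : Sym2 (X d) // e ∈ (Q d).edgeSet} := Fintype.ofFinite _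
  rw [Nat.card_eq_fintype_card,
    ← Fintype.card_congr (Equiv.ofBijective _ (lowEdge_bij d)), Fintype.card_sigma]
  simp [card_coordFix]

lemma ncard_edgeSet (d : ℕ) : (Q d).edgeSet.ncard = d * 2 ^ (d - 1) := by
  rw [← Nat.card_coe_set_eq]
  exact card_edgeSubtype d

end Count

section Nf

/-- The value `∑_{i=0}^{r} (r-i) C(d,i)`. -/
def Nf (d r : ℕ) : ℕ := ∑ i ∈ Finset.range (r + 1), (r - i) * d.choose i

lemma Nf_zero (d : ℕ) : Nf d 0 = 0 := by simp [Nf]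

lemma sum_id_mul_choose (d : ℕ) :
    ∑ j ∈ Finset.range (d + 1), j * d.choose j = d * 2 ^ (d - 1) := by
  cases d with
  | zero => simp
  | succ e =>
    rw [Finset.sum_range_succ'];
    simp only [Nat.zero_mul, Nat.add_zero]
    have : ∀ k, (k + 1) * (e + 1).choose (k + 1) = (e + 1) * e.choose k := by
      intro k
      rw [Nat.mul_comm]
      exact (Nat.add_one_mul_choose_eq e k).symm
    rw [Finset.sum_congr rfl (fun k _ => this k), ← Finset.mul_sum, Nat.sum_range_choose]
    norm_num

lemma Nf_self (d : ℕ) : Nf d d = d * 2 ^ (d - 1) := by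
  unfold Nf
  rw [← Finset.sum_range_reflect]
  have : ∀ j ∈ Finset.range (d + 1), (d - (d + 1 - 1 - j)) * d.choose (d + 1 - 1 - j) = j * d.choose j := by
    intro j hj
    rw [Finset.mem_range] at hj
    have hj' : j ≤ d := by omega
    have h1 : d + 1 - 1 - j = d - j := by omega
    rw [h1, Nat.choose_symm hj']
    congr 1
    omega
  rw [Finset.sum_congr rfl this, sum_id_mul_choose]

lemma Nf_rec (d s : ℕ) : Nf (d + 1) (s + 1) = Nf d (s + 1) + Nf d s := by
  unfold Nf
  rw [Finset.sum_range_succ' (fun i => (s + 1 - i) * (d + 1).choose i),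
      Finset.sum_range_succ' (fun i => (s + 1 - i) * d.choose i)]
  have key : ∀ k, (s + 1 - (k + 1)) * (d + 1).choose (k + 1)
      = (s - k) * d.choose k + (s + 1 - (k + 1)) * d.choose (k + 1) := by
    intro k
    rw [Nat.choose_succ_succ d k]
    have h : s + 1 - (k + 1) = s - k := by omega
    rw [h, Nat.mul_add]
  rw [Finset.sum_congr rfl (fun k _ => key k), Finset.sum_add_distrib]
  simp only [Nat.choose_zero_right, Nat.mul_one, Nat.sub_zero]
  omega

end Nf

section Emb

variable {d : ℕ}

/-- Embedding of `Q d` into `Q (d+1)` as the subcube with last coordinate `ε`. -/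
def emb (ε : Fin 2) (x : X d) : X (d + 1) := Fin.snoc x ε

lemma emb_inj (ε : Fin 2) : Function.Injective (emb (d := d) ε) := by
  intro x y h
  funext j
  have := congrFun h (Fin.castSucc j)
  simpa [emb, Fin.snoc_castSucc] using this

@[simp] lemma emb_last (ε : Fin 2) (x : X d) : emb ε x (Fin.last d) = ε := by
  simp [emb]

@[simp] lemma emb_castSucc (ε : Fin 2) (x : X d) (j : Fin d) :
    emb ε x (Fin.castSucc j) = x j := by simp [emb]

lemma flp_castSucc (ε : Fin 2) (x : X d) (j : Fin d) :
    flp (Fin.castSucc j) (emb ε x) = emb ε (flp j x) := by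
  funext k
  induction k using Fin.lastCases with
  | last =>
    rw [flp_ne' (Fin.castSucc_lt_last j).ne']
    simp
  | cast m =>
    rcases eq_or_ne m j with rfl | hmj
    · rw [flp_self]; simp
    · rw [flp_ne' (fun h => hmj (Fin.castSucc_inj.mp h))]
      simp [flp_ne' hmj]

lemma flp_last (ε : Fin 2) (x : X d) :
    flp (Fin.last d) (emb ε x) = emb (1 - ε) x := by
  funext k
  induction k using Fin.lastCases with
  | last => rw [flp_self]; simp
  | cast m =>
    rw [flp_ne' (Fin.ne_last_of_lt (Fin.castSucc_lt_last m))]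
    simp

/-- The image of a copy-edge. -/
lemma map_E (ε : Fin 2) (x : X d) (j : Fin d) :
    Sym2.map (emb ε) (E x j) = E (emb ε x) (Fin.castSucc j) := by
  unfold E
  rw [Sym2.map_pair_eq, flp_castSucc]

lemma map_edge_mem (ε : Fin 2) {e : Sym2 (X d)} (he : e ∈ (Q d).edgeSet) :
    Sym2.map (emb ε) e ∈ (Q (d + 1)).edgeSet := by
  obtain ⟨x, i, rfl⟩ := mem_edgeSet_iff.mp he
  rw [← E, map_E]
  exact edge_mem _ _

lemma mem_map_last {ε : Fin 2} {e : Sym2 (X d)} {y : X (d + 1)}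
    (hy : y ∈ Sym2.map (emb ε) e) : y (Fin.last d) = ε := by
  obtain ⟨a, -, rfl⟩ := Sym2.mem_map.mp hy
  simp

/-- One percolation step commutes with the subcube embedding. -/
lemma step_map (ε : Fin 2) (r : ℕ) (A : Set (Sym2 (X d))) :
    Sym2.map (emb ε) '' (edgeStep (Q d) r A)
      ⊆ edgeStep (Q (d + 1)) r (Sym2.map (emb ε) '' A) := by
  rintro - ⟨e, he, rfl⟩
  rcases he with hA | ⟨he, v, hv, hc⟩
  · exact Set.subset_union_left (Set.mem_image_of_mem _ hA)
  · refine Set.mem_union_right _ ⟨map_edge_mem ε he, emb ε v, ?_, ?_⟩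
    · exact Sym2.mem_map.mpr ⟨v, hv, rfl⟩
    · refine le_trans (le_of_le_of_eq hc
        (Set.ncard_image_of_injective _ (Sym2.map.injective (emb_inj ε))).symm) ?_
      apply Set.ncard_le_ncard ?_ (Set.toFinite _)
      rintro - ⟨f, ⟨hf1, hf2, hf3⟩, rfl⟩
      exact ⟨map_edge_mem ε hf1, Sym2.mem_map.mpr ⟨v, hf2, rfl⟩, Set.mem_image_of_mem _ hf3⟩

/-- The matching edge at `v`. -/
def mEdge (v : X d) : Sym2 (X (d + 1)) := s(emb 0 v, emb 1 v)

lemma mEdge_mem (v : X d) : mEdge v ∈ (Q (d + 1)).edgeSet := by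
  have : emb (d := d) 1 v = flp (Fin.last d) (emb 0 v) := by rw [flp_last]; norm_num
  rw [mEdge, this]
  exact edge_mem _ _


end Emb

section Upper

variable {d : ℕ}

lemma step_map_one (r : ℕ) (A : Set (Sym2 (X d))) :
    Sym2.map (emb 1) '' (edgeStep (Q d) r A)
      ⊆ edgeStep (Q (d + 1)) (r + 1) (Sym2.map (emb 1) '' A ∪ Set.range mEdge) := by
  rintro - ⟨e, he, rfl⟩
  rcases he with hA | ⟨he, v, hv, hc⟩
  · exact Set.subset_union_left (Set.mem_union_left _ (Set.mem_image_of_mem _ hA))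
  · refine Set.mem_union_right _ ⟨map_edge_mem 1 he, emb 1 v, Sym2.mem_map.mpr ⟨v, hv, rfl⟩, ?_⟩
    have hsub : insert (mEdge v) (Sym2.map (emb 1) '' {f | f ∈ (Q d).edgeSet ∧ v ∈ f ∧ f ∈ A})
        ⊆ {f | f ∈ (Q (d+1)).edgeSet ∧ emb 1 v ∈ f ∧
            f ∈ Sym2.map (emb 1) '' A ∪ Set.range mEdge} := by
      rintro f (rfl | ⟨f', ⟨hf1, hf2, hf3⟩, rfl⟩)
      · exact ⟨mEdge_mem v, Sym2.mem_mk_right _ _, Set.mem_union_right _ ⟨v, rfl⟩⟩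
      · exact ⟨map_edge_mem 1 hf1, Sym2.mem_map.mpr ⟨v, hf2, rfl⟩,
          Set.mem_union_left _ (Set.mem_image_of_mem _ hf3)⟩
    have hnotmem : mEdge v ∉ Sym2.map (emb 1) '' {f | f ∈ (Q d).edgeSet ∧ v ∈ f ∧ f ∈ A} := by
      rintro ⟨f', -, hf⟩
      have h0 : emb 0 v ∈ mEdge v := Sym2.mem_mk_left _ _
      rw [← hf] at h0
      have := mem_map_last h0
      simp at this
    calc r + 1 ≤ {f | f ∈ (Q d).edgeSet ∧ v ∈ f ∧ f ∈ A}.ncard + 1 := by omega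
    _ = (insert (mEdge v) (Sym2.map (emb 1) '' {f | f ∈ (Q d).edgeSet ∧ v ∈ f ∧ f ∈ A})).ncard := by
        rw [Set.ncard_insert_of_notMem hnotmem (Set.toFinite _),
          Set.ncard_image_of_injective _ (Sym2.map.injective (emb_inj 1))]
    _ ≤ _ := Set.ncard_le_ncard hsub (Set.toFinite _)

lemma iterate_map (ε : Fin 2) (r k : ℕ) (A : Set (Sym2 (X d))) :
    Sym2.map (emb ε) '' ((edgeStep (Q d) r)^[k] A)
      ⊆ (edgeStep (Q (d + 1)) r)^[k] (Sym2.map (emb ε) '' A) := by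
  induction k with
  | zero => exact le_refl _
  | succ k ih =>
    rw [Function.iterate_succ_apply', Function.iterate_succ_apply']
    exact (step_map ε r _).trans (edgeStep_mono _ _ ih)

lemma ev_map (ε : Fin 2) (r : ℕ) (A : Set (Sym2 (X d))) :
    Sym2.map (emb ε) '' (ev (Q d) r A) ⊆ ev (Q (d + 1)) r (Sym2.map (emb ε) '' A) := by
  rintro - ⟨e, he, rfl⟩
  obtain ⟨s, ⟨k, rfl⟩, hk⟩ := he
  exact iterate_subset_ev _ _ _ k (iterate_map ε r k A (Set.mem_image_of_mem _ hk))

lemma iterate_map_one (r k : ℕ) (A : Set (Sym2 (X d))) :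
    Sym2.map (emb 1) '' ((edgeStep (Q d) r)^[k] A)
      ⊆ (edgeStep (Q (d + 1)) (r + 1))^[k] (Sym2.map (emb 1) '' A ∪ Set.range mEdge) := by
  induction k with
  | zero => exact Set.subset_union_left
  | succ k ih =>
    rw [Function.iterate_succ_apply', Function.iterate_succ_apply']
    refine (step_map_one r _).trans (edgeStep_mono _ _ ?_)
    apply Set.union_subset
    · exact ih
    · calc Set.range mEdge ⊆ Sym2.map (emb 1) '' A ∪ Set.range mEdge := Set.subset_union_right
      _ ⊆ _ := by
          intro m hm
          exact iterate_mono_steps _ _ _ (Nat.zero_le k) hm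

lemma edgeSet_zero : (Q 0).edgeSet = ∅ := by
  ext e
  simp only [Set.mem_empty_iff_false, iff_false]
  intro he
  obtain ⟨x, i, -⟩ := mem_edgeSet_iff.mp he
  exact i.elim0

lemma cover_zero (d : ℕ) : (Q d).edgeSet ⊆ ev (Q d) 0 (∅ : Set (Sym2 (X d))) := by
  intro e he
  obtain ⟨x, i, rfl⟩ := mem_edgeSet_iff.mp he
  exact activate _ _ he (Sym2.mem_mk_left _ _) (Nat.zero_le _)

end Upper

section Main

lemma emb_init {d : ℕ} (x : X (d + 1)) : emb (x (Fin.last d)) (Fin.init x) = x :=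
  Fin.snoc_init_self x

lemma edge_decomp {d : ℕ} {e : Sym2 (X (d + 1))} (he : e ∈ (Q (d + 1)).edgeSet) :
    (∃ e' ∈ (Q d).edgeSet, e = Sym2.map (emb 0) e') ∨
    (∃ e' ∈ (Q d).edgeSet, e = Sym2.map (emb 1) e') ∨ (∃ v, e = mEdge v) := by
  obtain ⟨x, i, rfl⟩ := mem_edgeSet_iff.mp he
  induction i using Fin.lastCases with
  | last =>
    right; right
    refine ⟨Fin.init x, ?_⟩
    have hflp : flp (Fin.last d) x = emb (1 - x (Fin.last d)) (Fin.init x) := by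
      conv_lhs => rw [← emb_init x]
      rw [flp_last]
    rcases two_cases (x (Fin.last d)) with h0 | h1
    · have hx0 : x = emb 0 (Fin.init x) := by rw [← h0]; exact (emb_init x).symm
      have hpair : (x, flp (Fin.last d) x) = (emb 0 (Fin.init x), emb 1 (Fin.init x)) := by
        refine Prod.ext hx0 ?_
        rw [hflp, h0]
        norm_num
      rw [mEdge, Sym2.eq_iff]; exact Or.inl (Prod.ext_iff.mp hpair)
    · have hx1 : x = emb 1 (Fin.init x) := by rw [← h1]; exact (emb_init x).symm
      have hpair : (x, flp (Fin.last d) x) = (emb 1 (Fin.init x), emb 0 (Fin.init x)) := by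
        refine Prod.ext hx1 ?_
        rw [hflp, h1]
        norm_num
      rw [mEdge, Sym2.eq_iff]; exact Or.inr (Prod.ext_iff.mp hpair)
  | cast j =>
    have hx := emb_init x
    rcases two_cases (x (Fin.last d)) with h0 | h1
    · left
      refine ⟨E (Fin.init x) j, edge_mem _ _, ?_⟩
      rw [map_E, ← h0, hx]
      rfl
    · right; left
      refine ⟨E (Fin.init x) j, edge_mem _ _, ?_⟩
      rw [map_E, ← h1, hx]
      rfl

theorem exists_perc (d : ℕ) : ∀ r : ℕ, r ≤ d →
    ∃ A, A ⊆ (Q d).edgeSet ∧ (Q d).edgeSet ⊆ ev (Q d) r A ∧ A.ncard = Nf d r := by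
  induction d with
  | zero =>
    intro r hr
    obtain rfl : r = 0 := Nat.le_zero.mp hr
    exact ⟨∅, Set.empty_subset _, by rw [edgeSet_zero]; exact Set.empty_subset _, by simp [Nf_zero]⟩
  | succ d ih =>
    intro r hr
    rcases Nat.eq_zero_or_pos r with rfl | hpos
    · exact ⟨∅, Set.empty_subset _, cover_zero (d + 1), by simp [Nf_zero]⟩
    rcases Nat.lt_or_ge r (d + 1) with hlt | hge
    · obtain ⟨s, rfl⟩ : ∃ s, r = s + 1 := ⟨r - 1, by omega⟩
      obtain ⟨A1, hA1sub, hA1cov, hA1card⟩ := ih (s + 1) (by omega)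
      obtain ⟨A2, hA2sub, hA2cov, hA2card⟩ := ih s (by omega)
      refine ⟨Sym2.map (emb 0) '' A1 ∪ Sym2.map (emb 1) '' A2, ?_, ?_, ?_⟩
      · apply Set.union_subset <;> rintro - ⟨e', he', rfl⟩
        exacts [map_edge_mem 0 (hA1sub he'), map_edge_mem 1 (hA2sub he')]
      · set A : Set (Sym2 (X (d + 1))) :=
          Sym2.map (emb 0) '' A1 ∪ Sym2.map (emb 1) '' A2 with hA
        set EvA := ev (Q (d + 1)) (s + 1) A with hEvA
        have hcopy0 : Sym2.map (emb 0) '' (Q d).edgeSet ⊆ EvA :=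
          (Set.image_mono hA1cov).trans
            ((ev_map 0 (s + 1) A1).trans (ev_mono _ _ Set.subset_union_left))
        have hmatch : Set.range mEdge ⊆ EvA := by
          rintro - ⟨v, rfl⟩
          apply activate _ _ (mEdge_mem v) (Sym2.mem_mk_left _ _)
          have himg : (fun j => E (emb 0 v) (Fin.castSucc j)) '' Set.univ
              ⊆ {f | f ∈ (Q (d + 1)).edgeSet ∧ emb 0 v ∈ f ∧ f ∈ EvA} := by
            rintro - ⟨j, -, rfl⟩
            refine ⟨edge_mem _ _, Sym2.mem_mk_left _ _, ?_⟩
            show E (emb 0 v) (Fin.castSucc j) ∈ EvA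
            rw [← map_E]
            exact hcopy0 (Set.mem_image_of_mem _ (edge_mem j v))
          calc s + 1 ≤ d := by omega
          _ = ((fun j => E (emb 0 v) (Fin.castSucc j)) '' Set.univ).ncard := by
              rw [Set.ncard_image_of_injective _
                  (fun a b h => Fin.castSucc_inj.mp (E_inj _ h)),
                Set.ncard_univ, Nat.card_eq_fintype_card, Fintype.card_fin]
          _ ≤ _ := Set.ncard_le_ncard himg (Set.toFinite _)
        have hcopy1 : Sym2.map (emb 1) '' (Q d).edgeSet ⊆ EvA := by
          have hBsub : Sym2.map (emb 1) '' A2 ∪ Set.range mEdge ⊆ EvA :=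
            Set.union_subset (Set.subset_union_right.trans (subset_ev _ _ A)) hmatch
          rintro - ⟨e', he', rfl⟩
          obtain ⟨t, ⟨k, rfl⟩, hk⟩ := hA2cov he'
          exact iterate_subset_ev_of _ _ hBsub k
            (iterate_map_one s k A2 (Set.mem_image_of_mem _ hk))
        intro e he
        rcases edge_decomp he with ⟨e', he', rfl⟩ | ⟨e', he', rfl⟩ | ⟨v, rfl⟩
        · exact hcopy0 (Set.mem_image_of_mem _ he')
        · exact hcopy1 (Set.mem_image_of_mem _ he')
        · exact hmatch ⟨v, rfl⟩
      · have hdisj : Disjoint (Sym2.map (emb 0) '' A1) (Sym2.map (emb 1) '' A2) := by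
          rw [Set.disjoint_left]
          rintro - ⟨e1, he1, rfl⟩ ⟨e2, he2, heq⟩
          obtain ⟨x, i, rfl⟩ := mem_edgeSet_iff.mp (hA1sub he1)
          have h0 : emb 0 x ∈ Sym2.map (emb 0) s(x, flp i x) := by
            rw [Sym2.map_pair_eq]
            exact Sym2.mem_mk_left _ _
          rw [← heq] at *
          have := mem_map_last h0
          simp at this
        rw [Set.ncard_union_eq hdisj (Set.toFinite _) (Set.toFinite _),
          Set.ncard_image_of_injective _ (Sym2.map.injective (emb_inj 0)),
          Set.ncard_image_of_injective _ (Sym2.map.injective (emb_inj 1)),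
          hA1card, hA2card, Nf_rec]
    · obtain rfl : r = d + 1 := by omega
      refine ⟨(Q (d + 1)).edgeSet, le_refl _, subset_ev _ _ _, ?_⟩
      rw [ncard_edgeSet, Nf_self]

end Main

section Cert

/-- A linear-algebra certificate for the lower bound in `r`-edge bootstrap percolation
on `Q d`.  `U x` are the coefficients of a polynomial (degree `< r`) attached to vertex
`x`; the edge vector of the edge at `x` in direction `i` is the evaluation at `i`. -/
structure Cert (d r : ℕ) where
  V : Type
  [grp : AddCommGroup V]
  [mod : Module ℚ V]
  U : X d → ℕ → V
  hsupp : ∀ x t, r ≤ t → U x t = 0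
  compat : ∀ (x : X d) (i : Fin d),
    ∑ t ∈ Finset.range r, ((i : ℚ) ^ t) • U x t
      = ∑ t ∈ Finset.range r, ((i : ℚ) ^ t) • U (flp i x) t
  ι : Type
  [fin : Fintype ι]
  hcard : Fintype.card ι = Nf d r
  g : ι → V
  hli : LinearIndependent ℚ g
  hspan : ∀ j, g j ∈ Submodule.span ℚ
    {v | ∃ (x : X d) (i : Fin d), v = ∑ t ∈ Finset.range r, ((i : ℚ) ^ t) • U x t}

attribute [instance] Cert.grp Cert.mod Cert.fin

variable {d r : ℕ}

/-- The edge vector attached by a certificate to the edge at `x` in direction `i`. -/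
def Cert.w (C : Cert d r) (x : X d) (i : Fin d) : C.V :=
  ∑ t ∈ Finset.range r, ((i : ℚ) ^ t) • C.U x t

lemma Cert.w_flp (C : Cert d r) (x : X d) (i : Fin d) : C.w (flp i x) i = C.w x i :=
  (C.compat x i).symm

lemma Cert.wSet_eq (C : Cert d r) :
    {v | ∃ (x : X d) (i : Fin d), v = ∑ t ∈ Finset.range r, ((i : ℚ) ^ t) • C.U x t}
      = {v | ∃ (x : X d) (i : Fin d), v = C.w x i} := rfl

/-- Interchange lemma: an inverse matrix recovers the coefficient vectors. -/
lemma matrix_smul_recover {n : ℕ} {V : Type} [AddCommGroup V] [Module ℚ V]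
    (M N : Matrix (Fin n) (Fin n) ℚ) (h : N * M = 1) (u : Fin n → V) (t : Fin n) :
    ∑ k, N t k • (∑ s, M k s • u s) = u t := by
  have : ∀ k, N t k • (∑ s, M k s • u s) = ∑ s, (N t k * M k s) • u s := by
    intro k
    rw [Finset.smul_sum]
    exact Finset.sum_congr rfl fun s _ => (smul_smul _ _ _)
  rw [Finset.sum_congr rfl fun k _ => this k, Finset.sum_comm]
  have : ∀ s, ∑ k, (N t k * M k s) • u s = ((N * M) t s) • u s := by
    intro s
    rw [Matrix.mul_apply, ← Finset.sum_smul]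
  rw [Finset.sum_congr rfl fun s _ => this s, h]
  simp [Matrix.one_apply]

/-- Key local spanning property (P1): any `r` edge-vectors at a vertex span all
edge-vectors at that vertex. -/
lemma Cert.p1 (C : Cert d r) (v : X d) (I : Finset (Fin d)) (hI : I.card = r) (i₀ : Fin d) :
    C.w v i₀ ∈ Submodule.span ℚ ((C.w v) '' ↑I) := by
  classical
  set ρ : Fin r ≃o {x // x ∈ I} := I.orderIsoOfFin hI
  set nodes : Fin r → ℚ := fun k => ((ρ k : Fin d) : ℚ) with hnodes
  have hinj : Function.Injective nodes := by
    intro a b hab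
    simp only [hnodes] at hab
    apply ρ.injective
    apply Subtype.ext
    exact Fin.ext (by exact_mod_cast hab)
  set M : Matrix (Fin r) (Fin r) ℚ := Matrix.vandermonde nodes with hM
  have hdet : IsUnit M.det := by
    rw [isUnit_iff_ne_zero, hM]
    exact Matrix.det_vandermonde_ne_zero_iff.mpr hinj
  have hNM : M⁻¹ * M = 1 := Matrix.nonsing_inv_mul M hdet
  set Ufin : Fin r → C.V := fun t => C.U v t.val with hU
  have hw : ∀ k : Fin r, C.w v (ρ k) = ∑ s : Fin r, M k s • Ufin s := by
    intro k
    rw [Cert.w, Finset.sum_range]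
    rfl
  have hcoef : ∀ t : Fin r, Ufin t ∈ Submodule.span ℚ ((C.w v) '' ↑I) := by
    intro t
    rw [← matrix_smul_recover M M⁻¹ hNM Ufin t]
    apply Submodule.sum_mem
    intro k _
    apply Submodule.smul_mem
    rw [← hw k]
    exact Submodule.subset_span ⟨ρ k, (ρ k).2, rfl⟩
  rw [Cert.w, Finset.sum_range]
  apply Submodule.sum_mem
  intro t _
  exact Submodule.smul_mem _ _ (hcoef t)

end Cert

section CertConstr

/-- The trivial certificate for `r = 0`. -/
def certZero (d : ℕ) : Cert d 0 where
  V := ℚ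
  U := fun _ _ => 0
  hsupp := fun _ _ _ => rfl
  compat := fun _ _ => by simp
  ι := Fin 0
  hcard := by simp [Nf_zero]
  g := Fin.elim0
  hli := linearIndependent_empty_type
  hspan := fun j => j.elim0

lemma nodes_inj (d : ℕ) : Function.Injective (fun i : Fin d => ((i : ℕ) : ℚ)) := by
  intro a b h
  simp only at h
  exact Fin.ext (by exact_mod_cast h)

/-- The Lagrange-interpolation certificate for `r = d`. -/
noncomputable def certLagrange (d : ℕ) : Cert d d := by
  classical
  let χ : Sym2 (X d) → (Sym2 (X d) → ℚ) := fun e => Pi.single e 1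
  let M : Matrix (Fin d) (Fin d) ℚ := Matrix.vandermonde (fun i : Fin d => ((i : ℕ) : ℚ))
  have hdet : IsUnit M.det := by
    rw [isUnit_iff_ne_zero]
    exact Matrix.det_vandermonde_ne_zero_iff.mpr (nodes_inj d)
  have hMN : M * M⁻¹ = 1 := Matrix.mul_nonsing_inv M hdet
  let U : X d → ℕ → (Sym2 (X d) → ℚ) := fun x t =>
    if h : t < d then ∑ i : Fin d, (M⁻¹ ⟨t, h⟩ i) • χ (E x i) else 0
  have w_eq : ∀ (x : X d) (i : Fin d),
      (∑ t ∈ Finset.range d, ((i : ℚ) ^ t) • U x t) = χ (E x i) := by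
    intro x i
    rw [Finset.sum_range (fun t => ((i : ℚ) ^ t) • U x t)]
    have key : ∀ t : Fin d, ((i : ℚ) ^ (t : ℕ)) • U x t
        = M i t • (∑ j : Fin d, M⁻¹ t j • χ (E x j)) := by
      intro t
      simp only [U, t.isLt, dif_pos]
      rfl
    rw [Finset.sum_congr rfl (fun t _ => key t)]
    exact matrix_smul_recover M⁻¹ M hMN (fun j => χ (E x j)) i
  exact {
    V := Sym2 (X d) → ℚ
    U := U
    hsupp := fun x t ht => by simp only [U]; rw [dif_neg (by omega)]
    compat := fun x i => by rw [w_eq, w_eq, E_flp]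
    ι := {e : Sym2 (X d) // e ∈ (Q d).edgeSet}
    fin := by infer_instance
    hcard := by
      rw [← Nat.card_eq_fintype_card, card_edgeSubtype, Nf_self]
    g := fun e => χ e.val
    hli := by
      have h1 : LinearIndependent ℚ χ := by
        have := (Pi.basisFun ℚ (Sym2 (X d))).linearIndependent
        convert this using 1
        funext e
        rw [Pi.basisFun_apply]
      exact h1.comp Subtype.val Subtype.val_injective
    hspan := fun e => by
      obtain ⟨x, i, hxi⟩ := mem_edgeSet_iff.mp e.2
      apply Submodule.subset_span
      refine ⟨x, i, ?_⟩
      rw [w_eq]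
      exact congrArg χ hxi }

end CertConstr

section CertStep

variable {d r : ℕ}

lemma init_flp_cast (j : Fin d) (x : X (d + 1)) :
    Fin.init (flp (Fin.castSucc j) x) = flp j (Fin.init x) := by
  funext k
  show flp (Fin.castSucc j) x (Fin.castSucc k) = _
  rcases eq_or_ne k j with rfl | hkj
  · rw [flp_self, flp_self]
    rfl
  · rw [flp_ne' (fun h => hkj (Fin.castSucc_inj.mp h)), flp_ne' hkj]
    rfl

lemma last_flp_cast (j : Fin d) (x : X (d + 1)) :
    flp (Fin.castSucc j) x (Fin.last d) = x (Fin.last d) :=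
  flp_ne' (Fin.castSucc_lt_last j).ne' x

lemma init_flp_last (x : X (d + 1)) :
    Fin.init (flp (Fin.last d) x) = Fin.init x := by
  funext k
  show flp (Fin.last d) x (Fin.castSucc k) = _
  rw [flp_ne' (Fin.castSucc_lt_last k).ne]
  rfl

lemma sum_prod_eq {V1 V2 : Type} [AddCommGroup V1] [Module ℚ V1] [AddCommGroup V2]
    [Module ℚ V2] (s : Finset ℕ) (c : ℕ → ℚ) (f : ℕ → V1) (g : ℕ → V2) :
    (∑ t ∈ s, c t • ((f t, g t) : V1 × V2)) = (∑ t ∈ s, c t • f t, ∑ t ∈ s, c t • g t) := by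
  apply Prod.ext
  · rw [Prod.fst_sum]
    simp [Prod.smul_fst]
  · rw [Prod.snd_sum]
    simp [Prod.smul_snd]

lemma eval_shift {V : Type} [AddCommGroup V] [Module ℚ V] (A c : ℚ) (u : ℕ → V) (m : ℕ)
    (hu : ∀ t, m ≤ t → u t = 0) :
    ∑ t ∈ Finset.range (m + 1), c ^ t • ((if t = 0 then (0 : V) else u (t - 1)) - A • u t)
      = (c - A) • ∑ t ∈ Finset.range m, c ^ t • u t := by
  have split : ∀ t, c ^ t • ((if t = 0 then (0 : V) else u (t - 1)) - A • u t)
      = c ^ t • (if t = 0 then (0 : V) else u (t - 1)) - c ^ t • (A • u t) :=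
    fun t => smul_sub _ _ _
  rw [Finset.sum_congr rfl (fun t _ => split t), Finset.sum_sub_distrib]
  have h1 : ∑ t ∈ Finset.range (m + 1), c ^ t • (if t = 0 then (0 : V) else u (t - 1))
      = c • ∑ t ∈ Finset.range m, c ^ t • u t := by
    rw [Finset.sum_range_succ' (fun t => c ^ t • (if t = 0 then (0 : V) else u (t - 1)))]
    have e0 : (if (0 : ℕ) = 0 then (0 : V) else u (0 - 1)) = 0 := if_pos rfl
    rw [e0, smul_zero, add_zero, Finset.smul_sum]
    apply Finset.sum_congr rfl
    intro t _
    rw [if_neg (Nat.succ_ne_zero t), Nat.add_sub_cancel, pow_succ', mul_smul]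
  have h2 : ∑ t ∈ Finset.range (m + 1), c ^ t • (A • u t)
      = A • ∑ t ∈ Finset.range m, c ^ t • u t := by
    rw [Finset.sum_range_succ, hu m le_rfl, smul_zero, smul_zero, add_zero, Finset.smul_sum]
    apply Finset.sum_congr rfl
    intro t _
    rw [smul_comm]
  rw [h1, h2, sub_smul]

end CertStep

section CertSucc

variable {d r : ℕ}

lemma emb_init' (ε : Fin 2) (x : X d) : Fin.init (emb ε x) = x := by
  funext k
  show emb ε x (Fin.castSucc k) = x k
  simp

/-- Coefficients of `(z - d) * u(z)`. -/
def shiftOp {W : Type} [AddCommGroup W] [Module ℚ W] (A : ℚ) (u : ℕ → W) (t : ℕ) : W :=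
  (if t = 0 then 0 else u (t - 1)) - A • u t

/-- The combined coefficient system on `Q (d+1)`. -/
def combU (C1 : Cert d (r + 1)) (C2 : Cert d r) (x : X (d + 1)) (t : ℕ) : C1.V × C2.V :=
  (C1.U (Fin.init x) t,
    if x (Fin.last d) = 1 then shiftOp (d : ℚ) (C2.U (Fin.init x)) t else 0)

lemma combU_sum (C1 : Cert d (r + 1)) (C2 : Cert d r) (x : X (d + 1)) (c : ℚ) :
    ∑ t ∈ Finset.range (r + 1), c ^ t • combU C1 C2 x t
      = (∑ t ∈ Finset.range (r + 1), c ^ t • C1.U (Fin.init x) t,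
         if x (Fin.last d) = 1
           then (c - (d : ℚ)) • ∑ t ∈ Finset.range r, c ^ t • C2.U (Fin.init x) t
           else 0) := by
  by_cases hx : x (Fin.last d) = 1
  · simp only [combU, hx, if_pos]
    rw [sum_prod_eq]
    congr 1
    simp only [shiftOp]
    exact eval_shift (d : ℚ) c _ r (C2.hsupp _)
  · simp only [combU, hx, if_false]
    rw [sum_prod_eq]
    congr 1
    simp

lemma cast_castSucc_q (j : Fin d) :
    (((Fin.castSucc j : Fin (d + 1)) : ℕ) : ℚ) = ((j : ℕ) : ℚ) := by
  simp

lemma cast_last_q : (((Fin.last d) : ℕ) : ℚ) = (d : ℚ) := by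
  simp

/-- The inductive-step certificate. -/
noncomputable def certSucc (C1 : Cert d (r + 1)) (C2 : Cert d r) : Cert (d + 1) (r + 1) := by
  classical
  -- span set of the combined system
  set Wset : Set (C1.V × C2.V) :=
    {v | ∃ (x : X (d + 1)) (i : Fin (d + 1)),
      v = ∑ t ∈ Finset.range (r + 1), ((i : ℚ) ^ t) • combU C1 C2 x t} with hWset
  have hW0 : ∀ j : C1.ι, ((C1.g j, (0 : C2.V)) : C1.V × C2.V)
      ∈ Submodule.span ℚ Wset := by
    intro j
    have hsub : (LinearMap.inl ℚ C1.V C2.V) ''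
        {v | ∃ (x : X d) (i : Fin d),
          v = ∑ t ∈ Finset.range (r + 1), ((i : ℚ) ^ t) • C1.U x t} ⊆ Wset := by
      rintro - ⟨v, ⟨x', j', rfl⟩, rfl⟩
      refine ⟨emb 0 x', Fin.castSucc j', ?_⟩
      rw [combU_sum, emb_init']
      have h0 : emb 0 x' (Fin.last d) = 0 := emb_last 0 x'
      rw [h0]
      apply Prod.ext
      · show _ = ∑ t ∈ Finset.range (r + 1), _ • C1.U x' t
        rw [cast_castSucc_q]
        rfl
      · show (∑ t ∈ Finset.range (r + 1), _ • C1.U x' t, (0 : C2.V)).2 = _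
        simp
    have h1 := C1.hspan j
    have h2 : (LinearMap.inl ℚ C1.V C2.V) (C1.g j)
        ∈ Submodule.map (LinearMap.inl ℚ C1.V C2.V) (Submodule.span ℚ _) :=
      Submodule.mem_map_of_mem h1
    rw [Submodule.map_span] at h2
    exact Submodule.span_mono hsub h2
  have hW2 : ∀ j : C2.ι, ∃ h : C1.V × C2.V,
      h ∈ Submodule.span ℚ Wset ∧ h.2 = C2.g j := by
    intro j
    have hkey : ∀ (x' : X d) (j' : Fin d),
        (∑ t ∈ Finset.range r, ((j' : ℚ) ^ t) • C2.U x' t)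
          ∈ Submodule.map (LinearMap.snd ℚ C1.V C2.V) (Submodule.span ℚ Wset) := by
      intro x' j'
      set c : ℚ := ((j' : ℕ) : ℚ) - (d : ℚ) with hc
      have hcne : c ≠ 0 := by
        have hlt : ((j' : ℕ) : ℚ) < (d : ℚ) := by exact_mod_cast j'.isLt
        rw [hc]
        exact sub_ne_zero.mpr (ne_of_lt hlt)
      set wB : C1.V × C2.V := ∑ t ∈ Finset.range (r + 1),
        (((Fin.castSucc j' : Fin (d + 1)) : ℚ) ^ t) • combU C1 C2 (emb 1 x') t with hwB
      have hwB_eq : wB = (∑ t ∈ Finset.range (r + 1), ((j' : ℚ) ^ t) • C1.U x' t,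
          c • ∑ t ∈ Finset.range r, ((j' : ℚ) ^ t) • C2.U x' t) := by
        rw [hwB, combU_sum, emb_init']
        have h1 : emb 1 x' (Fin.last d) = 1 := emb_last 1 x'
        rw [h1, if_pos rfl, cast_castSucc_q, hc]
      refine ⟨c⁻¹ • wB, Submodule.smul_mem _ _
        (Submodule.subset_span ⟨emb 1 x', Fin.castSucc j', rfl⟩), ?_⟩
      rw [map_smul, hwB_eq, LinearMap.snd_apply]
      show c⁻¹ • (c • _) = _
      rw [smul_smul, inv_mul_cancel₀ hcne, one_smul]
    have hle : Submodule.span ℚ {v | ∃ (x' : X d) (j' : Fin d),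
        v = ∑ t ∈ Finset.range r, ((j' : ℚ) ^ t) • C2.U x' t}
        ≤ Submodule.map (LinearMap.snd ℚ C1.V C2.V) (Submodule.span ℚ Wset) := by
      rw [Submodule.span_le]
      rintro - ⟨x', j', rfl⟩
      exact hkey x' j'
    exact Submodule.mem_map.mp (hle (C2.hspan j))
  let pick : C2.ι → C1.V × C2.V := fun j => (hW2 j).choose
  have pickmem : ∀ j, pick j ∈ Submodule.span ℚ Wset := fun j => (hW2 j).choose_spec.1
  have picksnd : ∀ j, (pick j).2 = C2.g j := fun j => (hW2 j).choose_spec.2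
  exact {
    V := C1.V × C2.V
    U := combU C1 C2
    hsupp := fun x t ht => by
      have h1 := C1.hsupp (Fin.init x) t ht
      have h2 := C2.hsupp (Fin.init x) t (by omega)
      have h3 : C2.U (Fin.init x) (t - 1) = 0 := C2.hsupp _ _ (by omega)
      simp [combU, shiftOp, h1, h2, h3, ite_self]
    compat := fun x i => by
      rw [combU_sum, combU_sum]
      induction i using Fin.lastCases with
      | last =>
        rw [init_flp_last]
        apply Prod.ext
        · rfl
        · show (if x (Fin.last d) = 1 then _ else 0)
            = (if flp (Fin.last d) x (Fin.last d) = 1 then _ else 0)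
          rw [cast_last_q, sub_self, zero_smul, ite_self, ite_self]
      | cast j =>
        rw [init_flp_cast, last_flp_cast]
        apply Prod.ext
        · show (∑ t ∈ Finset.range (r + 1), _ • C1.U (Fin.init x) t)
            = (∑ t ∈ Finset.range (r + 1), _ • C1.U (flp j (Fin.init x)) t)
          rw [cast_castSucc_q]
          exact C1.compat (Fin.init x) j
        · show (if x (Fin.last d) = 1 then _ else 0) = (if x (Fin.last d) = 1 then _ else 0)
          by_cases hx : x (Fin.last d) = 1
          · rw [if_pos hx, if_pos hx, cast_castSucc_q]
            congr 1
            exact C2.compat (Fin.init x) j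
          · rw [if_neg hx, if_neg hx]
    ι := C1.ι ⊕ C2.ι
    fin := by infer_instance
    hcard := by
      rw [Fintype.card_sum, C1.hcard, C2.hcard]
      exact (Nf_rec d r).symm
    g := Sum.elim (fun j => (C1.g j, 0)) pick
    hli := by
      rw [Fintype.linearIndependent_iff]
      intro co hco
      rw [Fintype.sum_sum_type] at hco
      simp only [Sum.elim_inl, Sum.elim_inr] at hco
      have hsndeq : ∀ b : C2.ι, (co (Sum.inr b) • pick b).2 = co (Sum.inr b) • C2.g b := by
        intro b
        rw [Prod.smul_snd, picksnd]
      have happ : ∑ b : C2.ι, co (Sum.inr b) • C2.g b = 0 := by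
        have h := congrArg (LinearMap.snd ℚ C1.V C2.V) hco
        rw [map_add, map_sum, map_sum, map_zero] at h
        simp only [LinearMap.snd_apply] at h
        rw [Finset.sum_congr rfl (fun b _ => hsndeq b)] at h
        have hz : ∑ a : C1.ι, ((co (Sum.inl a) • ((C1.g a, (0 : C2.V)) : C1.V × C2.V)).2)
            = 0 := by
          apply Finset.sum_eq_zero
          intro a _
          rw [Prod.smul_snd]
          simp
        rw [hz, zero_add] at h
        exact h
      have hb : ∀ b : C2.ι, co (Sum.inr b) = 0 :=
        Fintype.linearIndependent_iff.mp C2.hli _ happ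
      have hz2 : ∑ b : C2.ι, co (Sum.inr b) • pick b = 0 := by
        apply Finset.sum_eq_zero
        intro b _
        rw [hb b, zero_smul]
      rw [hz2, add_zero] at hco
      have happ1 : ∑ a : C1.ι, co (Sum.inl a) • C1.g a = 0 := by
        have h := congrArg (LinearMap.fst ℚ C1.V C2.V) hco
        rw [map_sum, map_zero] at h
        simp only [LinearMap.fst_apply] at h
        have : ∀ a : C1.ι, (co (Sum.inl a) • ((C1.g a, (0 : C2.V)) : C1.V × C2.V)).1
            = co (Sum.inl a) • C1.g a := by
          intro a
          rw [Prod.smul_fst]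
        rw [Finset.sum_congr rfl (fun a _ => this a)] at h
        exact h
      have ha : ∀ a : C1.ι, co (Sum.inl a) = 0 :=
        Fintype.linearIndependent_iff.mp C1.hli _ happ1
      intro i
      cases i with
      | inl a => exact ha a
      | inr b => exact hb b
    hspan := fun j => by
      cases j with
      | inl a => exact hW0 a
      | inr b => exact pickmem b }

end CertSucc

section Lower

/-- A certificate for every `r ≤ d`. -/
noncomputable def certOf : (d : ℕ) → (r : ℕ) → r ≤ d → Cert d r
  | d, 0, _ => certZero d
  | d + 1, r + 1, h =>
    if hrd : r = d then by
      rw [hrd]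
      exact certLagrange (d + 1)
    else certSucc (certOf d (r + 1) (by omega)) (certOf d r (by omega))

variable {d r : ℕ}

/-- The edge-vector map on `Sym2`. -/
noncomputable def phi (C : Cert d r) (e : Sym2 (X d)) : C.V :=
  if h : ∃ (x : X d) (i : Fin d), e = E x i then
    C.w h.choose h.choose_spec.choose
  else 0

lemma w_of_E_eq (C : Cert d r) {v x : X d} {i₀ i : Fin d} (h : E v i₀ = E x i) :
    C.w x i = C.w v i₀ := by
  rcases Sym2.eq_iff.mp h with ⟨h1, h2⟩ | ⟨h1, h2⟩
  · subst h1
    obtain rfl : i₀ = i := flp_inj h2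
    rfl
  · have hx : x = flp i₀ v := h2.symm
    subst hx
    have hii : i = i₀ := by
      apply flp_inj (x := flp i₀ v)
      rw [← h1, flp_flp]
    subst hii
    exact C.w_flp v _

lemma phi_E (C : Cert d r) (v : X d) (i₀ : Fin d) : phi C (E v i₀) = C.w v i₀ := by
  have hex : ∃ (x : X d) (i : Fin d), E v i₀ = E x i := ⟨v, i₀, rfl⟩
  rw [phi, dif_pos hex]
  exact w_of_E_eq C hex.choose_spec.choose_spec

lemma span_step (C : Cert d r) (A : Set (Sym2 (X d))) :
    ∀ e ∈ edgeStep (Q d) r A, phi C e ∈ Submodule.span ℚ (phi C '' A) := by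
  intro e he
  rcases he with hA | ⟨he, v, hv, hc⟩
  · exact Submodule.subset_span (Set.mem_image_of_mem _ hA)
  · have hEv : e ∈ Set.range (E v) := by rw [← edges_at]; exact ⟨he, hv⟩
    obtain ⟨i₀, rfl⟩ := hEv
    set D := {i : Fin d | E v i ∈ A} with hD
    have hset : {f | f ∈ (Q d).edgeSet ∧ v ∈ f ∧ f ∈ A} = E v '' D := by
      ext f
      constructor
      · rintro ⟨hf1, hf2, hf3⟩
        have : f ∈ Set.range (E v) := by rw [← edges_at]; exact ⟨hf1, hf2⟩
        obtain ⟨i, rfl⟩ := this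
        exact ⟨i, hf3, rfl⟩
      · rintro ⟨i, hi, rfl⟩
        exact ⟨edge_mem i v, Sym2.mem_mk_left _ _, hi⟩
    rw [hset, Set.ncard_image_of_injective _ (E_inj v)] at hc
    obtain ⟨tset, htsub, htcard⟩ := Set.exists_subset_card_eq hc
    have htfin : tset.Finite := Set.toFinite _
    classical
    have hIcard : htfin.toFinset.card = r := by
      rw [← Set.ncard_eq_toFinset_card]; exact htcard
    have hP1 := C.p1 v htfin.toFinset hIcard i₀
    rw [phi_E]
    have hmono : (C.w v) '' ↑htfin.toFinset ⊆ ↑(Submodule.span ℚ (phi C '' A)) := by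
      rintro - ⟨i, hiI, rfl⟩
      have hiD : i ∈ D := htsub (by simpa using hiI)
      rw [← phi_E C v i]
      exact Submodule.subset_span (Set.mem_image_of_mem _ hiD)
    have := Submodule.span_le.mpr hmono
    exact this hP1

lemma span_iterate (C : Cert d r) (A : Set (Sym2 (X d))) (k : ℕ) :
    ∀ e ∈ (edgeStep (Q d) r)^[k] A, phi C e ∈ Submodule.span ℚ (phi C '' A) := by
  induction k with
  | zero => exact fun e he => Submodule.subset_span (Set.mem_image_of_mem _ he)
  | succ k ih =>
    intro e he
    rw [Function.iterate_succ_apply'] at he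
    have h1 := span_step C ((edgeStep (Q d) r)^[k] A) e he
    have h2 : Submodule.span ℚ (phi C '' ((edgeStep (Q d) r)^[k] A))
        ≤ Submodule.span ℚ (phi C '' A) := by
      apply Submodule.span_le.mpr
      rintro - ⟨f, hf, rfl⟩
      exact ih f hf
    exact h2 h1

theorem lower_bound (hr : r ≤ d) {A : Set (Sym2 (X d))} (hA : EdgePercolates (Q d) r A) :
    Nf d r ≤ A.ncard := by
  classical
  set C := certOf d r hr with hC
  obtain ⟨hsub, k, hk⟩ := hA
  set S := Submodule.span ℚ (phi C '' A) with hS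
  have hedge : ∀ e ∈ (Q d).edgeSet, phi C e ∈ S := by
    rw [← hk]
    exact span_iterate C A k
  have hgen : ∀ j, C.g j ∈ S := by
    intro j
    refine Submodule.span_le.mpr ?_ (C.hspan j)
    rintro - ⟨x, i, rfl⟩
    have heq : (∑ t ∈ Finset.range r, ((i : ℚ) ^ t) • C.U x t) = C.w x i := rfl
    rw [heq, ← phi_E C x i]
    exact hedge _ (edge_mem i x)
  haveI : Module.Finite ℚ S := FiniteDimensional.span_of_finite ℚ (A.toFinite.image _)
  have h1 : Fintype.card C.ι ≤ Module.finrank ℚ S := by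
    have hli : LinearIndependent ℚ (fun j => (⟨C.g j, hgen j⟩ : S)) := by
      apply LinearIndependent.of_comp S.subtype
      exact C.hli
    exact hli.fintype_card_le_finrank
  have h2 : Module.finrank ℚ S ≤ A.ncard := by
    haveI : Fintype (phi C '' A) := (A.toFinite.image _).fintype
    calc Module.finrank ℚ S ≤ (phi C '' A).toFinset.card := finrank_span_le_card _
    _ = (phi C '' A).ncard := (Set.ncard_eq_toFinset_card' _).symm
    _ ≤ A.ncard := Set.ncard_image_le A.toFinite
  have h3 := C.hcard
  omega

end Lower

theorem me_eq (d r : ℕ) (hr : r ≤ d) : me (Q d) r = Nf d r := by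
  have hupper : ∃ A, EdgePercolates (Q d) r A ∧ A.ncard = Nf d r := by
    obtain ⟨A, hsub, hcov, hcard⟩ := exists_perc d r hr
    exact ⟨A, (percolates_iff (Q d) r hsub).mpr hcov, hcard⟩
  obtain ⟨A0, hA0, hA0card⟩ := hupper
  unfold me
  apply le_antisymm
  · exact Nat.sInf_le ⟨A0, hA0, hA0card⟩
  · have hne : {k | ∃ A, EdgePercolates (Q d) r A ∧ A.ncard = k}.Nonempty :=
      ⟨Nf d r, A0, hA0, hA0card⟩
    refine le_csInf hne ?_
    rintro b ⟨A, hA, rfl⟩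
    exact lower_bound hr hA

end MeHyper

/-- For integers `d ≥ 1` and `0 ≤ r ≤ d`, the minimum size of a percolating set in the
`r`-edge bootstrap percolation on the hypercube `Q_d = K_2^d` is
`m_e(K_2^d, r) = ∑_{i=0}^{r} (r − i)·C(d, i)`. -/
theorem me_hypercube (d r : ℕ) (hd : 1 ≤ d) (hr : r ≤ d) :
    me (hammingGraph 2 d) r = ∑ i ∈ Finset.range (r + 1), (r - i) * d.choose i :=
  MeHyper.me_eq d r hr
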